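/- Let Γ : S¹ → ℝ² be a C² closed curve parameterized by arc length and Φ : S¹ → ℝ² a C² vector field along it. Then there exist α, β ∈ ℝ and b ∈ ℝ² such that Φ(s) = A Γ(s) + b for all s, where A is the 2×2 matrix with rows (α, −β) and (β, α), if and only if the function s ↦ (Φ'(s)·τ(s), Φ'(s)·n(s)) is constant on S¹. -/

import Mathlib

/-- Rotation by π/2: `(x,y)^⊥ = (-y,x)`. -/
def perp (v : ℝ × ℝ) : ℝ × ℝ := (-v.2, v.1)

/-- Euclidean dot product on `ℝ × ℝ`. -/
def dot (v w : ℝ × ℝ) : ℝ := v.1 * w.1 + v.2 * w.2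

private lemma hasDerivAt_aff {Γ : ℝ → ℝ × ℝ} {s : ℝ} (h : HasDerivAt Γ (deriv Γ s) s)
    (α β : ℝ) (b : ℝ × ℝ) :
    HasDerivAt (fun t => α • Γ t + β • perp (Γ t) + b)
      (α • deriv Γ s + β • perp (deriv Γ s)) s := by
  have hf : HasDerivAt (fun t => (Γ t).1) (deriv Γ s).1 s :=
    (ContinuousLinearMap.fst ℝ ℝ ℝ).hasFDerivAt.comp_hasDerivAt s h
  have hs : HasDerivAt (fun t => (Γ t).2) (deriv Γ s).2 s :=
    (ContinuousLinearMap.snd ℝ ℝ ℝ).hasFDerivAt.comp_hasDerivAt s h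
  have hp : HasDerivAt (fun t => perp (Γ t)) (perp (deriv Γ s)) s := hs.neg.prodMk hf
  exact ((h.const_smul α).add (hp.const_smul β)).add_const b

/-- Characterization of infinitesimal similarity motions along a closed arc-length
parameterized `C²` curve: `Φ = AΓ + b` with `A = ((α,-β),(β,α))` (i.e. `AΓ = αΓ + β Γ^⊥`)
iff `s ↦ (Φ'·τ, Φ'·n)` is constant, where `τ = Γ'`, `n = τ^⊥`. -/
theorem similarity_deformation_characterization
    (Γ Φ : ℝ → ℝ × ℝ)
    (hΓper : Function.Periodic Γ 1) (hΦper : Function.Periodic Φ 1)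
    (hΓ : ContDiff ℝ 2 Γ) (hΦ : ContDiff ℝ 2 Φ)
    (harc : ∀ s, dot (deriv Γ s) (deriv Γ s) = 1) :
    (∃ (α β : ℝ) (b : ℝ × ℝ), ∀ s, Φ s = α • Γ s + β • perp (Γ s) + b) ↔
      (∃ c : ℝ × ℝ, ∀ s,
        (dot (deriv Φ s) (deriv Γ s), dot (deriv Φ s) (perp (deriv Γ s))) = c) := by
  have hΓdiff : Differentiable ℝ Γ := hΓ.differentiable (by norm_num)
  have hΦdiff : Differentiable ℝ Φ := hΦ.differentiable (by norm_num)
  constructor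
  · rintro ⟨α, β, b, h⟩
    refine ⟨(α, β), fun s => ?_⟩
    have hΦeq : Φ = fun t => α • Γ t + β • perp (Γ t) + b := funext h
    have hd : HasDerivAt Φ (α • deriv Γ s + β • perp (deriv Γ s)) s := by
      rw [hΦeq]; exact hasDerivAt_aff (hΓdiff s).hasDerivAt α β b
    rw [hd.deriv]
    have h1 := harc s
    simp only [dot, perp, Prod.smul_fst, Prod.smul_snd, Prod.fst_add, Prod.snd_add,
      smul_eq_mul, Prod.mk.injEq] at h1 ⊢
    exact ⟨by linear_combination α * h1, by linear_combination β * h1⟩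
  · rintro ⟨⟨α, β⟩, h⟩
    refine ⟨α, β, Φ 0 - (α • Γ 0 + β • perp (Γ 0)), fun s => ?_⟩
    have hg : ∀ t, HasDerivAt (fun u => Φ u - (α • Γ u + β • perp (Γ u))) 0 t := by
      intro t
      have hA : HasDerivAt (fun u => α • Γ u + β • perp (Γ u) + 0)
          (α • deriv Γ t + β • perp (deriv Γ t)) t :=
        hasDerivAt_aff (hΓdiff t).hasDerivAt α β 0
      have hA' : HasDerivAt (fun u => α • Γ u + β • perp (Γ u))
          (α • deriv Γ t + β • perp (deriv Γ t)) t := by simpa using hA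
      have hΦd := (hΦdiff t).hasDerivAt
      have hkey : deriv Φ t = α • deriv Γ t + β • perp (deriv Γ t) := by
        have h2 := h t
        have h1 := harc t
        rw [Prod.mk.injEq] at h2
        obtain ⟨ha, hb⟩ := h2
        ext
        · simp only [dot, perp] at ha hb h1
          simp only [perp, Prod.fst_add, Prod.smul_fst, smul_eq_mul]
          linear_combination (deriv Γ t).1 * ha - (deriv Γ t).2 * hb - (deriv Φ t).1 * h1
        · simp only [dot, perp] at ha hb h1
          simp only [perp, Prod.snd_add, Prod.smul_snd, smul_eq_mul]
          linear_combination (deriv Γ t).2 * ha + (deriv Γ t).1 * hb - (deriv Φ t).2 * h1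
      have := hΦd.sub hA'
      rw [hkey] at this
      rw [sub_self] at this; exact this
    have hconst : (fun u => Φ u - (α • Γ u + β • perp (Γ u))) s
        = (fun u => Φ u - (α • Γ u + β • perp (Γ u))) 0 := by
      exact is_const_of_deriv_eq_zero (fun t => (hg t).differentiableAt)
        (fun t => (hg t).deriv) s 0
    simp only at hconst
    have : Φ s = α • Γ s + β • perp (Γ s) + (Φ 0 - (α • Γ 0 + β • perp (Γ 0))) := by
      rw [← hconst]; abel
    exact this
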